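/- Define z(β) = e·β + log β and 𝒳(β) = e^{−1}·z(β)² − z(β)·β·(1 − exp(−z(β))) for β > 0. Then 𝒳(e^{−1}) = 0, the first, second and third derivatives of 𝒳 at β = e^{−1} all vanish, and the fourth derivative of 𝒳 at β = e^{−1} equals 8e³. -/

import Mathlib

open Real Filter Set Topology

noncomputable def KSG0 : ℝ → ℝ := fun y =>
      (1 : ℝ) * (Real.exp 1)⁻¹ ^ 1 * (y ^ 0 * (y⁻¹) ^ 0 * Real.log y ^ 2 * Real.exp (-(Real.exp 1 * y + Real.log y)) ^ 0)
      + (1 : ℝ) * (y ^ 1 * (y⁻¹) ^ 0 * Real.log y ^ 1 * Real.exp (-(Real.exp 1 * y + Real.log y)) ^ 0)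
      + (1 : ℝ) * (y ^ 1 * (y⁻¹) ^ 0 * Real.log y ^ 1 * Real.exp (-(Real.exp 1 * y + Real.log y)) ^ 1)
      + (1 : ℝ) * Real.exp 1 ^ 1 * (y ^ 2 * (y⁻¹) ^ 0 * Real.log y ^ 0 * Real.exp (-(Real.exp 1 * y + Real.log y)) ^ 1)

noncomputable def KSG1 : ℝ → ℝ := fun y =>
      (1 : ℝ) * (y ^ 0 * (y⁻¹) ^ 0 * Real.log y ^ 0 * Real.exp (-(Real.exp 1 * y + Real.log y)) ^ 0)
      + (1 : ℝ) * (y ^ 0 * (y⁻¹) ^ 0 * Real.log y ^ 0 * Real.exp (-(Real.exp 1 * y + Real.log y)) ^ 1)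
      + (1 : ℝ) * (y ^ 0 * (y⁻¹) ^ 0 * Real.log y ^ 1 * Real.exp (-(Real.exp 1 * y + Real.log y)) ^ 0)
      + (2 : ℝ) * (Real.exp 1)⁻¹ ^ 1 * (y ^ 0 * (y⁻¹) ^ 1 * Real.log y ^ 1 * Real.exp (-(Real.exp 1 * y + Real.log y)) ^ 0)
      + (1 : ℝ) * Real.exp 1 ^ 1 * (y ^ 1 * (y⁻¹) ^ 0 * Real.log y ^ 0 * Real.exp (-(Real.exp 1 * y + Real.log y)) ^ 1)
      + (-1 : ℝ) * Real.exp 1 ^ 1 * (y ^ 1 * (y⁻¹) ^ 0 * Real.log y ^ 1 * Real.exp (-(Real.exp 1 * y + Real.log y)) ^ 1)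
      + (-1 : ℝ) * Real.exp 1 ^ 2 * (y ^ 2 * (y⁻¹) ^ 0 * Real.log y ^ 0 * Real.exp (-(Real.exp 1 * y + Real.log y)) ^ 1)

noncomputable def KSG2 : ℝ → ℝ := fun y =>
      (-2 : ℝ) * Real.exp 1 ^ 1 * (y ^ 0 * (y⁻¹) ^ 0 * Real.log y ^ 0 * Real.exp (-(Real.exp 1 * y + Real.log y)) ^ 1)
      + (1 : ℝ) * (y ^ 0 * (y⁻¹) ^ 1 * Real.log y ^ 0 * Real.exp (-(Real.exp 1 * y + Real.log y)) ^ 0)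
      + (-1 : ℝ) * (y ^ 0 * (y⁻¹) ^ 1 * Real.log y ^ 0 * Real.exp (-(Real.exp 1 * y + Real.log y)) ^ 1)
      + (2 : ℝ) * (Real.exp 1)⁻¹ ^ 1 * (y ^ 0 * (y⁻¹) ^ 2 * Real.log y ^ 0 * Real.exp (-(Real.exp 1 * y + Real.log y)) ^ 0)
      + (-2 : ℝ) * (Real.exp 1)⁻¹ ^ 1 * (y ^ 0 * (y⁻¹) ^ 2 * Real.log y ^ 1 * Real.exp (-(Real.exp 1 * y + Real.log y)) ^ 0)
      + (-2 : ℝ) * Real.exp 1 ^ 2 * (y ^ 1 * (y⁻¹) ^ 0 * Real.log y ^ 0 * Real.exp (-(Real.exp 1 * y + Real.log y)) ^ 1)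
      + (1 : ℝ) * Real.exp 1 ^ 2 * (y ^ 1 * (y⁻¹) ^ 0 * Real.log y ^ 1 * Real.exp (-(Real.exp 1 * y + Real.log y)) ^ 1)
      + (1 : ℝ) * Real.exp 1 ^ 3 * (y ^ 2 * (y⁻¹) ^ 0 * Real.log y ^ 0 * Real.exp (-(Real.exp 1 * y + Real.log y)) ^ 1)

noncomputable def KSG3 : ℝ → ℝ := fun y =>
      (3 : ℝ) * Real.exp 1 ^ 2 * (y ^ 0 * (y⁻¹) ^ 0 * Real.log y ^ 0 * Real.exp (-(Real.exp 1 * y + Real.log y)) ^ 1)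
      + (3 : ℝ) * Real.exp 1 ^ 1 * (y ^ 0 * (y⁻¹) ^ 1 * Real.log y ^ 0 * Real.exp (-(Real.exp 1 * y + Real.log y)) ^ 1)
      + (-1 : ℝ) * (y ^ 0 * (y⁻¹) ^ 2 * Real.log y ^ 0 * Real.exp (-(Real.exp 1 * y + Real.log y)) ^ 0)
      + (2 : ℝ) * (y ^ 0 * (y⁻¹) ^ 2 * Real.log y ^ 0 * Real.exp (-(Real.exp 1 * y + Real.log y)) ^ 1)
      + (-6 : ℝ) * (Real.exp 1)⁻¹ ^ 1 * (y ^ 0 * (y⁻¹) ^ 3 * Real.log y ^ 0 * Real.exp (-(Real.exp 1 * y + Real.log y)) ^ 0)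
      + (4 : ℝ) * (Real.exp 1)⁻¹ ^ 1 * (y ^ 0 * (y⁻¹) ^ 3 * Real.log y ^ 1 * Real.exp (-(Real.exp 1 * y + Real.log y)) ^ 0)
      + (3 : ℝ) * Real.exp 1 ^ 3 * (y ^ 1 * (y⁻¹) ^ 0 * Real.log y ^ 0 * Real.exp (-(Real.exp 1 * y + Real.log y)) ^ 1)
      + (-1 : ℝ) * Real.exp 1 ^ 3 * (y ^ 1 * (y⁻¹) ^ 0 * Real.log y ^ 1 * Real.exp (-(Real.exp 1 * y + Real.log y)) ^ 1)
      + (-1 : ℝ) * Real.exp 1 ^ 4 * (y ^ 2 * (y⁻¹) ^ 0 * Real.log y ^ 0 * Real.exp (-(Real.exp 1 * y + Real.log y)) ^ 1)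

noncomputable def KSG4 : ℝ → ℝ := fun y =>
      (-4 : ℝ) * Real.exp 1 ^ 3 * (y ^ 0 * (y⁻¹) ^ 0 * Real.log y ^ 0 * Real.exp (-(Real.exp 1 * y + Real.log y)) ^ 1)
      + (-6 : ℝ) * Real.exp 1 ^ 2 * (y ^ 0 * (y⁻¹) ^ 1 * Real.log y ^ 0 * Real.exp (-(Real.exp 1 * y + Real.log y)) ^ 1)
      + (-8 : ℝ) * Real.exp 1 ^ 1 * (y ^ 0 * (y⁻¹) ^ 2 * Real.log y ^ 0 * Real.exp (-(Real.exp 1 * y + Real.log y)) ^ 1)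
      + (2 : ℝ) * (y ^ 0 * (y⁻¹) ^ 3 * Real.log y ^ 0 * Real.exp (-(Real.exp 1 * y + Real.log y)) ^ 0)
      + (-6 : ℝ) * (y ^ 0 * (y⁻¹) ^ 3 * Real.log y ^ 0 * Real.exp (-(Real.exp 1 * y + Real.log y)) ^ 1)
      + (22 : ℝ) * (Real.exp 1)⁻¹ ^ 1 * (y ^ 0 * (y⁻¹) ^ 4 * Real.log y ^ 0 * Real.exp (-(Real.exp 1 * y + Real.log y)) ^ 0)
      + (-12 : ℝ) * (Real.exp 1)⁻¹ ^ 1 * (y ^ 0 * (y⁻¹) ^ 4 * Real.log y ^ 1 * Real.exp (-(Real.exp 1 * y + Real.log y)) ^ 0)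
      + (-4 : ℝ) * Real.exp 1 ^ 4 * (y ^ 1 * (y⁻¹) ^ 0 * Real.log y ^ 0 * Real.exp (-(Real.exp 1 * y + Real.log y)) ^ 1)
      + (1 : ℝ) * Real.exp 1 ^ 4 * (y ^ 1 * (y⁻¹) ^ 0 * Real.log y ^ 1 * Real.exp (-(Real.exp 1 * y + Real.log y)) ^ 1)
      + (1 : ℝ) * Real.exp 1 ^ 5 * (y ^ 2 * (y⁻¹) ^ 0 * Real.log y ^ 0 * Real.exp (-(Real.exp 1 * y + Real.log y)) ^ 1)

lemma KSstep0 (y : ℝ) (hy : 0 < y) : HasDerivAt KSG0 (KSG1 y) y := by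
  have hy' : y ≠ 0 := hy.ne'
  have hL : HasDerivAt Real.log y⁻¹ y := Real.hasDerivAt_log hy'
  have hE : HasDerivAt (fun t => Real.exp (-(Real.exp 1 * t + Real.log t)))
      (Real.exp (-(Real.exp 1 * y + Real.log y)) * -(Real.exp 1 * 1 + y⁻¹)) y :=
    ((((hasDerivAt_id y).const_mul (Real.exp 1)).add hL).neg).exp
  have h := ((((HasDerivAt.const_mul ((1 : ℝ) * (Real.exp 1)⁻¹ ^ 1) ((((hasDerivAt_pow 0 y).mul ((hasDerivAt_inv hy').pow 0)).mul (hL.pow 2)).mul (hE.pow 0))).add (HasDerivAt.const_mul ((1 : ℝ)) ((((hasDerivAt_pow 1 y).mul ((hasDerivAt_inv hy').pow 0)).mul (hL.pow 1)).mul (hE.pow 0)))).add (HasDerivAt.const_mul ((1 : ℝ)) ((((hasDerivAt_pow 1 y).mul ((hasDerivAt_inv hy').pow 0)).mul (hL.pow 1)).mul (hE.pow 1)))).add (HasDerivAt.const_mul ((1 : ℝ) * Real.exp 1 ^ 1) ((((hasDerivAt_pow 2 y).mul ((hasDerivAt_inv hy').pow 0)).mul (hL.pow 0)).mul (hE.pow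 1))))
  unfold KSG0 KSG1
  convert h using 1
  · rfl
  · rfl
  · rfl
  simp only [Pi.mul_apply, Pi.pow_apply, Nat.cast_ofNat, Nat.cast_one, Nat.cast_zero, pow_zero, pow_one, one_mul, mul_one, Pi.one_apply]
  generalize Real.exp (-(Real.exp 1 * y + Real.log y)) = Ey
  generalize Real.log y = Ly
  obtain ⟨ee, hee, hne⟩ : ∃ t : ℝ, Real.exp 1 = t ∧ t ≠ 0 := ⟨_, rfl, Real.exp_ne_zero 1⟩
  rw [hee]
  field_simp
  ring

lemma KSstep1 (y : ℝ) (hy : 0 < y) : HasDerivAt KSG1 (KSG2 y) y := by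
  have hy' : y ≠ 0 := hy.ne'
  have hL : HasDerivAt Real.log y⁻¹ y := Real.hasDerivAt_log hy'
  have hE : HasDerivAt (fun t => Real.exp (-(Real.exp 1 * t + Real.log t)))
      (Real.exp (-(Real.exp 1 * y + Real.log y)) * -(Real.exp 1 * 1 + y⁻¹)) y :=
    ((((hasDerivAt_id y).const_mul (Real.exp 1)).add hL).neg).exp
  have h := (((((((HasDerivAt.const_mul ((1 : ℝ)) ((((hasDerivAt_pow 0 y).mul ((hasDerivAt_inv hy').pow 0)).mul (hL.pow 0)).mul (hE.pow 0))).add (HasDerivAt.const_mul ((1 : ℝ)) ((((hasDerivAt_pow 0 y).mul ((hasDerivAt_inv hy').pow 0)).mul (hL.pow 0)).mul (hE.pow 1)))).add (HasDerivAt.const_mul ((1 : ℝ)) ((((hasDerivAt_pow 0 y).mul ((hasDerivAt_inv hy').pow 0)).mul (hL.pow 1)).mul (hE.pow 0)))).add (HasDerivAt.const_mul ((2 : ℝ) * (Real.exp 1)⁻¹ ^ 1) ((((hasDerivAt_pow 0 y).mul ((hasDerivAt_inv hy').pow 1)).mul (hL.pow 1)).mul (hE.pow 0)))).add (HasDerivAt.const_mul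 ((1 : ℝ) * Real.exp 1 ^ 1) ((((hasDerivAt_pow 1 y).mul ((hasDerivAt_inv hy').pow 0)).mul (hL.pow 0)).mul (hE.pow 1)))).add (HasDerivAt.const_mul ((-1 : ℝ) * Real.exp 1 ^ 1) ((((hasDerivAt_pow 1 y).mul ((hasDerivAt_inv hy').pow 0)).mul (hL.pow 1)).mul (hE.pow 1)))).add (HasDerivAt.const_mul ((-1 : ℝ) * Real.exp 1 ^ 2) ((((hasDerivAt_pow 2 y).mul ((hasDerivAt_inv hy').pow 0)).mul (hL.pow 0)).mul (hE.pow 1))))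
  unfold KSG1 KSG2
  convert h using 1
  · rfl
  · rfl
  · rfl
  simp only [Pi.mul_apply, Pi.pow_apply, Nat.cast_ofNat, Nat.cast_one, Nat.cast_zero, pow_zero, pow_one, one_mul, mul_one, Pi.one_apply]
  generalize Real.exp (-(Real.exp 1 * y + Real.log y)) = Ey
  generalize Real.log y = Ly
  obtain ⟨ee, hee, hne⟩ : ∃ t : ℝ, Real.exp 1 = t ∧ t ≠ 0 := ⟨_, rfl, Real.exp_ne_zero 1⟩
  rw [hee]
  field_simp
  ring

lemma KSstep2 (y : ℝ) (hy : 0 < y) : HasDerivAt KSG2 (KSG3 y) y := by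
  have hy' : y ≠ 0 := hy.ne'
  have hL : HasDerivAt Real.log y⁻¹ y := Real.hasDerivAt_log hy'
  have hE : HasDerivAt (fun t => Real.exp (-(Real.exp 1 * t + Real.log t)))
      (Real.exp (-(Real.exp 1 * y + Real.log y)) * -(Real.exp 1 * 1 + y⁻¹)) y :=
    ((((hasDerivAt_id y).const_mul (Real.exp 1)).add hL).neg).exp
  have h := ((((((((HasDerivAt.const_mul ((-2 : ℝ) * Real.exp 1 ^ 1) ((((hasDerivAt_pow 0 y).mul ((hasDerivAt_inv hy').pow 0)).mul (hL.pow 0)).mul (hE.pow 1))).add (HasDerivAt.const_mul ((1 : ℝ)) ((((hasDerivAt_pow 0 y).mul ((hasDerivAt_inv hy').pow 1)).mul (hL.pow 0)).mul (hE.pow 0)))).add (HasDerivAt.const_mul ((-1 : ℝ)) ((((hasDerivAt_pow 0 y).mul ((hasDerivAt_inv hy').pow 1)).mul (hL.pow 0)).mul (hE.pow 1)))).add (HasDerivAt.const_mul ((2 : ℝ) * (Real.exp 1)⁻¹ ^ 1) ((((hasDerivAt_pow 0 y).mul ((hasDerivAt_inv hy').pow 2)).mul (hL.pow 0)).mul (hE.pow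 0)))).add (HasDerivAt.const_mul ((-2 : ℝ) * (Real.exp 1)⁻¹ ^ 1) ((((hasDerivAt_pow 0 y).mul ((hasDerivAt_inv hy').pow 2)).mul (hL.pow 1)).mul (hE.pow 0)))).add (HasDerivAt.const_mul ((-2 : ℝ) * Real.exp 1 ^ 2) ((((hasDerivAt_pow 1 y).mul ((hasDerivAt_inv hy').pow 0)).mul (hL.pow 0)).mul (hE.pow 1)))).add (HasDerivAt.const_mul ((1 : ℝ) * Real.exp 1 ^ 2) ((((hasDerivAt_pow 1 y).mul ((hasDerivAt_inv hy').pow 0)).mul (hL.pow 1)).mul (hE.pow 1)))).add (HasDerivAt.const_mul ((1 : ℝ) * Real.exp 1 ^ 3) ((((hasDerivAt_pow 2 y).mul ((hasDerivAt_inv hy').pow 0)).mul (hL.pow 0)).mul (hE.pow 1))))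
  unfold KSG2 KSG3
  convert h using 1
  · rfl
  · rfl
  · rfl
  simp only [Pi.mul_apply, Pi.pow_apply, Nat.cast_ofNat, Nat.cast_one, Nat.cast_zero, pow_zero, pow_one, one_mul, mul_one, Pi.one_apply]
  generalize Real.exp (-(Real.exp 1 * y + Real.log y)) = Ey
  generalize Real.log y = Ly
  obtain ⟨ee, hee, hne⟩ : ∃ t : ℝ, Real.exp 1 = t ∧ t ≠ 0 := ⟨_, rfl, Real.exp_ne_zero 1⟩
  rw [hee]
  simp only [inv_pow]
  field_simp
  ring

lemma KSstep3 (y : ℝ) (hy : 0 < y) : HasDerivAt KSG3 (KSG4 y) y := by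
  have hy' : y ≠ 0 := hy.ne'
  have hL : HasDerivAt Real.log y⁻¹ y := Real.hasDerivAt_log hy'
  have hE : HasDerivAt (fun t => Real.exp (-(Real.exp 1 * t + Real.log t)))
      (Real.exp (-(Real.exp 1 * y + Real.log y)) * -(Real.exp 1 * 1 + y⁻¹)) y :=
    ((((hasDerivAt_id y).const_mul (Real.exp 1)).add hL).neg).exp
  have h := (((((((((HasDerivAt.const_mul ((3 : ℝ) * Real.exp 1 ^ 2) ((((hasDerivAt_pow 0 y).mul ((hasDerivAt_inv hy').pow 0)).mul (hL.pow 0)).mul (hE.pow 1))).add (HasDerivAt.const_mul ((3 : ℝ) * Real.exp 1 ^ 1) ((((hasDerivAt_pow 0 y).mul ((hasDerivAt_inv hy').pow 1)).mul (hL.pow 0)).mul (hE.pow 1)))).add (HasDerivAt.const_mul ((-1 : ℝ)) ((((hasDerivAt_pow 0 y).mul ((hasDerivAt_inv hy').pow 2)).mul (hL.pow 0)).mul (hE.pow 0)))).add (HasDerivAt.const_mul ((2 : ℝ)) ((((hasDerivAt_pow 0 y).mul ((hasDerivAt_inv hy').pow 2)).mul (hL.pow 0)).mul (hE.pow 1)))).add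 (HasDerivAt.const_mul ((-6 : ℝ) * (Real.exp 1)⁻¹ ^ 1) ((((hasDerivAt_pow 0 y).mul ((hasDerivAt_inv hy').pow 3)).mul (hL.pow 0)).mul (hE.pow 0)))).add (HasDerivAt.const_mul ((4 : ℝ) * (Real.exp 1)⁻¹ ^ 1) ((((hasDerivAt_pow 0 y).mul ((hasDerivAt_inv hy').pow 3)).mul (hL.pow 1)).mul (hE.pow 0)))).add (HasDerivAt.const_mul ((3 : ℝ) * Real.exp 1 ^ 3) ((((hasDerivAt_pow 1 y).mul ((hasDerivAt_inv hy').pow 0)).mul (hL.pow 0)).mul (hE.pow 1)))).add (HasDerivAt.const_mul ((-1 : ℝ) * Real.exp 1 ^ 3) ((((hasDerivAt_pow 1 y).mul ((hasDerivAt_inv hy').pow 0)).mul (hL.pow 1)).mul (hE.pow 1)))).add (HasDerivAt.const_mul ((-1 : ℝ) * Real.exp 1 ^ 4) ((((hasDerivAt_pow 2 y).mul ((hasDerivAt_inv hy').pow 0)).mul (hL.pow 0)).mul (hE.pow 1))))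
  unfold KSG3 KSG4
  convert h using 1
  · rfl
  · rfl
  · rfl
  simp only [Pi.mul_apply, Pi.pow_apply, Nat.cast_ofNat, Nat.cast_one, Nat.cast_zero, pow_zero, pow_one, one_mul, mul_one, Pi.one_apply]
  generalize Real.exp (-(Real.exp 1 * y + Real.log y)) = Ey
  generalize Real.log y = Ly
  obtain ⟨ee, hee, hne⟩ : ∃ t : ℝ, Real.exp 1 = t ∧ t ≠ 0 := ⟨_, rfl, Real.exp_ne_zero 1⟩
  rw [hee]
  simp only [inv_pow]
  field_simp
  ring


lemma KSlog_inv_exp : Real.log (Real.exp 1)⁻¹ = -1 := by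
  rw [Real.log_inv, Real.log_exp]

lemma KSarg_zero : -(Real.exp 1 * (Real.exp 1)⁻¹ + Real.log (Real.exp 1)⁻¹) = 0 := by
  rw [KSlog_inv_exp, mul_inv_cancel₀ (Real.exp_ne_zero 1)]; ring

lemma KSval1 : KSG1 (Real.exp 1)⁻¹ = 0 := by
  unfold KSG1
  rw [KSarg_zero, Real.exp_zero, KSlog_inv_exp, inv_inv]
  obtain ⟨ee, hee, hne⟩ : ∃ t : ℝ, Real.exp 1 = t ∧ t ≠ 0 := ⟨_, rfl, Real.exp_ne_zero 1⟩
  rw [hee]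
  field_simp
  ring

lemma KSval2 : KSG2 (Real.exp 1)⁻¹ = 0 := by
  unfold KSG2
  rw [KSarg_zero, Real.exp_zero, KSlog_inv_exp, inv_inv]
  obtain ⟨ee, hee, hne⟩ : ∃ t : ℝ, Real.exp 1 = t ∧ t ≠ 0 := ⟨_, rfl, Real.exp_ne_zero 1⟩
  rw [hee]
  field_simp
  ring

lemma KSval3 : KSG3 (Real.exp 1)⁻¹ = 0 := by
  unfold KSG3
  rw [KSarg_zero, Real.exp_zero, KSlog_inv_exp, inv_inv]
  obtain ⟨ee, hee, hne⟩ : ∃ t : ℝ, Real.exp 1 = t ∧ t ≠ 0 := ⟨_, rfl, Real.exp_ne_zero 1⟩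
  rw [hee]
  field_simp
  ring

lemma KSval4 : KSG4 (Real.exp 1)⁻¹ = 8 * (Real.exp 1) ^ 3 := by
  unfold KSG4
  rw [KSarg_zero, Real.exp_zero, KSlog_inv_exp, inv_inv]
  obtain ⟨ee, hee, hne⟩ : ∃ t : ℝ, Real.exp 1 = t ∧ t ≠ 0 := ⟨_, rfl, Real.exp_ne_zero 1⟩
  rw [hee]
  field_simp
  ring

/-- With `z β = e β + log β` and
`𝒳 β = e⁻¹ z(β)² - z(β) β (1 - exp (-z β))`, one has `𝒳 e⁻¹ = 0`, the first three
derivatives of `𝒳` vanish at `β = e⁻¹`, and the fourth derivative there is `8 e³`. -/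
theorem karpSipser_fluid_leaves_derivatives (z 𝒳 : ℝ → ℝ)
    (hz : ∀ β : ℝ, z β = Real.exp 1 * β + Real.log β)
    (hX : ∀ β : ℝ, 𝒳 β = (Real.exp 1)⁻¹ * (z β) ^ 2 - z β * β * (1 - Real.exp (-(z β)))) :
    𝒳 (Real.exp 1)⁻¹ = 0 ∧
    deriv 𝒳 (Real.exp 1)⁻¹ = 0 ∧
    iteratedDeriv 2 𝒳 (Real.exp 1)⁻¹ = 0 ∧
    iteratedDeriv 3 𝒳 (Real.exp 1)⁻¹ = 0 ∧
    iteratedDeriv 4 𝒳 (Real.exp 1)⁻¹ = 8 * (Real.exp 1) ^ 3 := by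
  have hmem : (Real.exp 1)⁻¹ ∈ Set.Ioi (0:ℝ) := by
    simp only [Set.mem_Ioi]; positivity
  have e0 : 𝒳 = KSG0 := by
    funext β
    rw [hX β, hz β]
    unfold KSG0
    obtain ⟨ee, hee, hne⟩ : ∃ t : ℝ, Real.exp 1 = t ∧ t ≠ 0 := ⟨_, rfl, Real.exp_ne_zero 1⟩
    rw [hee]
    field_simp
    ring
  have d1 : ∀ x ∈ Set.Ioi (0:ℝ), deriv 𝒳 x = KSG1 x := by
    intro x hx; rw [e0]; exact (KSstep0 x hx).deriv
  have d2 : ∀ x ∈ Set.Ioi (0:ℝ), deriv (deriv 𝒳) x = KSG2 x := by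
    intro x hx
    have hev : deriv 𝒳 =ᶠ[nhds x] KSG1 :=
      Filter.eventually_of_mem (isOpen_Ioi.mem_nhds hx) d1
    rw [hev.deriv_eq]; exact (KSstep1 x hx).deriv
  have d3 : ∀ x ∈ Set.Ioi (0:ℝ), deriv (deriv (deriv 𝒳)) x = KSG3 x := by
    intro x hx
    have hev : deriv (deriv 𝒳) =ᶠ[nhds x] KSG2 :=
      Filter.eventually_of_mem (isOpen_Ioi.mem_nhds hx) d2
    rw [hev.deriv_eq]; exact (KSstep2 x hx).deriv
  have d4 : ∀ x ∈ Set.Ioi (0:ℝ), deriv (deriv (deriv (deriv 𝒳))) x = KSG4 x := by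
    intro x hx
    have hev : deriv (deriv (deriv 𝒳)) =ᶠ[nhds x] KSG3 :=
      Filter.eventually_of_mem (isOpen_Ioi.mem_nhds hx) d3
    rw [hev.deriv_eq]; exact (KSstep3 x hx).deriv
  refine ⟨?_, ?_, ?_, ?_, ?_⟩
  · rw [hX, hz]
    rw [show Real.exp 1 * (Real.exp 1)⁻¹ + Real.log (Real.exp 1)⁻¹ = 0 from by
      have := KSarg_zero; linarith]
    ring
  · rw [d1 _ hmem, KSval1]
  · rw [show (2:ℕ) = 1 + 1 from rfl, iteratedDeriv_succ, iteratedDeriv_one,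
      d2 _ hmem, KSval2]
  · rw [show (3:ℕ) = 1 + 1 + 1 from rfl, iteratedDeriv_succ, iteratedDeriv_succ,
      iteratedDeriv_one, d3 _ hmem, KSval3]
  · rw [show (4:ℕ) = 1 + 1 + 1 + 1 from rfl, iteratedDeriv_succ, iteratedDeriv_succ,
      iteratedDeriv_succ, iteratedDeriv_one, d4 _ hmem, KSval4]
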